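/- \sum_{k=0}^\infty binom(2k,k) / 8^k * (H_{2k}^{(2)} - (1/4) H_k^{(2)}) = \pi^2 / (16 sqrt(2)). -/

import Mathlib

open Real Finset Set

namespace CBH

noncomputable def cB (k : ℕ) : ℝ := (Nat.choose (2*k) k : ℝ) / 4 ^ k
noncomputable def oS (k : ℕ) : ℝ := ∑ i ∈ Finset.range k, 1 / (2*(i:ℝ)+1)^2
noncomputable def bB (k : ℕ) : ℝ := cB k / (2*(k:ℝ)+1)
noncomputable def aA (k : ℕ) : ℝ := cB k * oS k

lemma cB_zero : cB 0 = 1 := by simp [cB]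

lemma cB_pos (k : ℕ) : 0 < cB k := by
  apply div_pos
  · exact_mod_cast Nat.choose_pos (by omega)
  · positivity

lemma cB_succ (k : ℕ) : cB (k+1) * (2*(k:ℝ)+2) = cB k * (2*(k:ℝ)+1) := by
  have h := Nat.succ_mul_centralBinom_succ k
  have h' : ((k:ℝ)+1) * ((Nat.choose (2*(k+1)) (k+1) : ℕ) : ℝ)
      = 2 * (2*(k:ℝ)+1) * ((Nat.choose (2*k) k : ℕ) : ℝ) := by
    rw [← Nat.centralBinom_eq_two_mul_choose, ← Nat.centralBinom_eq_two_mul_choose]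
    exact_mod_cast congrArg (Nat.cast (R := ℝ)) h
  simp only [cB]
  have h4 : (4:ℝ)^(k+1) = 4 * 4^k := by ring
  field_simp [h4]
  linear_combination (2 * (4:ℝ)^k) * h'

lemma cB_le_one (k : ℕ) : cB k ≤ 1 := by
  induction k with
  | zero => simp [cB]
  | succ n ih =>
    have h := cB_succ n
    have h2 : (0:ℝ) < 2*(n:ℝ)+2 := by positivity
    have : cB (n+1) = cB n * (2*(n:ℝ)+1) / (2*(n:ℝ)+2) := by
      field_simp at h ⊢; linarith [h]
    rw [this]
    rw [div_le_one h2]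
    nlinarith [cB_pos n, ih]

lemma oS_zero : oS 0 = 0 := by simp [oS]

lemma oS_succ (k : ℕ) : oS (k+1) = oS k + 1/(2*(k:ℝ)+1)^2 := by
  simp [oS, Finset.sum_range_succ]

lemma oS_nonneg (k : ℕ) : 0 ≤ oS k := by
  apply Finset.sum_nonneg; intro i _; positivity

lemma oS_le (k : ℕ) : oS k ≤ 2 - 2/(2*(k:ℝ)+1) := by
  induction k with
  | zero => simp [oS]
  | succ n ih =>
    rw [oS_succ]
    push_cast
    have h1 : (0:ℝ) < 2*(n:ℝ)+1 := by positivity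
    have h2 : (0:ℝ) < 2*(n:ℝ)+3 := by positivity
    have key : 1/(2*(n:ℝ)+1)^2 ≤ 2/(2*(n:ℝ)+1) - 2/(2*(n:ℝ)+3) := by
      rw [div_sub_div _ _ (ne_of_gt h1) (ne_of_gt h2),
        div_le_div_iff₀ (by positivity) (by positivity)]
      ring_nf
      nlinarith
    have : 2*((n:ℝ)+1)+1 = 2*(n:ℝ)+3 := by ring
    rw [this]
    linarith

lemma oS_le_two (k : ℕ) : oS k ≤ 2 := by
  have h1 := oS_le k
  have h2 : (0:ℝ) ≤ 2/(2*(k:ℝ)+1) := by positivity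
  linarith

lemma bB_bound (k : ℕ) : |bB k| ≤ 1 := by
  simp only [bB]
  rw [abs_of_nonneg (le_of_lt (div_pos (cB_pos k) (by positivity)))]
  rw [div_le_one (by positivity)]
  have := cB_le_one k
  nlinarith [cB_pos k]

lemma aA_bound (k : ℕ) : |aA k| ≤ 2 := by
  simp only [aA]
  rw [abs_of_nonneg (mul_nonneg (cB_pos k).le (oS_nonneg k))]
  calc cB k * oS k ≤ 1 * 2 := mul_le_mul (cB_le_one k) (oS_le_two k) (oS_nonneg k) one_pos.le
  _ = 2 := by ring

lemma cB_bound (k : ℕ) : |cB k| ≤ 1 := by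
  rw [abs_of_pos (cB_pos k)]; exact cB_le_one k

lemma aA_succ (k : ℕ) : aA (k+1) * (2*(k:ℝ)+2) = aA k * (2*(k:ℝ)+1) + bB k := by
  have h1 := cB_succ k
  have hne : (2*(k:ℝ)+1) ≠ 0 := by positivity
  simp only [aA, oS_succ, bB]
  field_simp
  linear_combination (oS k * (2*(k:ℝ)+1)^2 + 1) * h1

lemma harmonic_eq (k : ℕ) :
    (∑ j ∈ Finset.Icc 1 (2 * k), (1 : ℝ) / (j : ℝ) ^ 2) -
      (1 / 4) * ∑ j ∈ Finset.Icc 1 k, (1 : ℝ) / (j : ℝ) ^ 2 = oS k := by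
  induction k with
  | zero => simp [oS]
  | succ n ih =>
    have e1 : 2 * (n+1) = (2*n+1) + 1 := by ring
    rw [e1, Finset.sum_Icc_succ_top (by omega), Finset.sum_Icc_succ_top (by omega),
      Finset.sum_Icc_succ_top (by omega), oS_succ]
    push_cast
    have h1 : (0:ℝ) < 2*(n:ℝ)+1 := by positivity
    have key : (1:ℝ)/(2*(n:ℝ)+1+1)^2 - (1/4) * (1/((n:ℝ)+1)^2) = 0 := by
      have : (2*(n:ℝ)+1+1)^2 = 4*((n:ℝ)+1)^2 := by ring
      rw [this]
      field_simp
      ring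
    nlinarith [ih, key]

/-! ### Summability -/

lemma summable_poly_geom (e : ℕ → ℝ) (E : ℝ) (hE : ∀ k, |e k| ≤ E * ((k:ℝ)+1))
    {x : ℝ} (hx : |x| ≤ 4/5) (m : ℕ) :
    Summable (fun k => e k * x ^ (2*k+m)) := by
  have hE0 : 0 ≤ E := by
    have := hE 0
    have h0 : (0:ℝ) ≤ |e 0| := abs_nonneg _
    simp at this; linarith
  have hgeom : Summable (fun k : ℕ => E * ((k:ℝ)+1) * (16/25:ℝ)^k) := by
    have h1 : Summable (fun k : ℕ => (k:ℝ) * (16/25:ℝ)^k) := by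
      simpa using summable_pow_mul_geometric_of_norm_lt_one (R := ℝ) 1
        (r := 16/25) (by rw [Real.norm_eq_abs]; rw [abs_of_nonneg]; norm_num; norm_num)
    have h2 : Summable (fun k : ℕ => (16/25:ℝ)^k) :=
      summable_geometric_of_lt_one (by norm_num) (by norm_num)
    have := (h1.add h2).mul_left E
    apply this.congr
    intro k; ring
  apply Summable.of_norm
  apply Summable.of_nonneg_of_le (fun k => norm_nonneg _) _ hgeom
  intro k
  rw [norm_eq_abs, abs_mul, abs_pow]
  calc |e k| * |x| ^ (2*k+m) ≤ (E * ((k:ℝ)+1)) * (4/5:ℝ)^(2*k+m) := by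
        apply mul_le_mul (hE k) (pow_le_pow_left₀ (abs_nonneg x) hx _) (by positivity)
        positivity
    _ ≤ E * ((k:ℝ)+1) * (16/25:ℝ)^k := by
        apply mul_le_mul_of_nonneg_left _ (by positivity)
        calc (4/5:ℝ)^(2*k+m) ≤ (4/5:ℝ)^(2*k) := by
              apply pow_le_pow_of_le_one (by norm_num) (by norm_num); omega
          _ = (16/25:ℝ)^k := by rw [pow_mul]; norm_num

lemma summable_deriv_bound (E : ℝ) (hE : 0 ≤ E) :
    Summable (fun k : ℕ => E * (2*(k:ℝ)+2) * (5/4) * (16/25:ℝ)^k) := by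
  have h1 : Summable (fun k : ℕ => (k:ℝ) * (16/25:ℝ)^k) := by
    simpa using summable_pow_mul_geometric_of_norm_lt_one (R := ℝ) 1
      (r := 16/25) (by rw [Real.norm_eq_abs]; rw [abs_of_nonneg]; norm_num; norm_num)
  have h2 : Summable (fun k : ℕ => (16/25:ℝ)^k) :=
    summable_geometric_of_lt_one (by norm_num) (by norm_num)
  apply ((h1.mul_left (E*2*(5/4))).add (h2.mul_left (E*2*(5/4)))).congr
  intro k; ring

/-! ### Differentiation of the series -/

lemma hasDerivAt_master (e : ℕ → ℝ) (E : ℝ) (hE : ∀ k, |e k| ≤ E) (m : ℕ) (hm : m ≤ 1)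
    {x : ℝ} (hx : x ∈ Set.Ioo (-(4/5):ℝ) (4/5)) :
    HasDerivAt (fun y : ℝ => ∑' k, e k * y ^ (2*k+m))
      (∑' k, e k * (((2*k+m : ℕ)):ℝ) * x ^ (2*k+m-1)) x := by
  have hE0 : 0 ≤ E := le_trans (abs_nonneg _) (hE 0)
  have key := hasDerivAt_tsum_of_isPreconnected
    (u := fun k : ℕ => E * (2*(k:ℝ)+2) * (5/4) * (16/25:ℝ)^k)
    (𝕜 := ℝ) (F := ℝ)
    (g := fun k (y : ℝ) => e k * y ^ (2*k+m))
    (g' := fun k y => e k * (((2*k+m : ℕ)):ℝ) * y ^ (2*k+m-1))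
    (t := Set.Ioo (-(4/5):ℝ) (4/5)) (y₀ := 0)
    (summable_deriv_bound E hE0) isOpen_Ioo (isPreconnected_Ioo)
    ?_ ?_ (by constructor <;> norm_num) ?_ hx
  · exact key
  · intro k y _
    have := (hasDerivAt_pow (2*k+m) y).const_mul (e k)
    exact this.congr_deriv (by ring)
  · intro k y hy
    have hyb : |y| ≤ 4/5 := by
      rw [abs_le]; exact ⟨hy.1.le, hy.2.le⟩
    rw [norm_eq_abs, abs_mul, abs_mul, abs_pow]
    have h1 : |e k| * |(((2*k+m : ℕ)):ℝ)| ≤ E * (2*(k:ℝ)+2) := by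
      apply mul_le_mul (hE k) _ (abs_nonneg _) hE0
      rw [abs_of_nonneg (by positivity)]
      push_cast
      have : (m:ℝ) ≤ 1 := by exact_mod_cast hm
      linarith
    calc |e k| * |(((2*k+m : ℕ)):ℝ)| * |y| ^ (2*k+m-1)
        ≤ (E * (2*(k:ℝ)+2)) * (4/5:ℝ)^(2*k+m-1) := by
          apply mul_le_mul h1 (pow_le_pow_left₀ (abs_nonneg _) hyb _) (by positivity)
          positivity
      _ ≤ E * (2*(k:ℝ)+2) * (5/4) * (16/25:ℝ)^k := by
          rw [mul_assoc (E * (2*(k:ℝ)+2))]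
          apply mul_le_mul_of_nonneg_left _ (by positivity)
          have hle : (4/5:ℝ)^(2*k+m-1) ≤ (4/5:ℝ)^(2*k-1) := by
            apply pow_le_pow_of_le_one (by norm_num) (by norm_num); omega
          calc (4/5:ℝ)^(2*k+m-1) ≤ (4/5:ℝ)^(2*k-1) := hle
            _ ≤ (5/4) * (16/25:ℝ)^k := by
              rcases Nat.eq_zero_or_pos k with hk | hk
              · subst hk; norm_num
              · have h2 : 2*k-1+1 = 2*k := by omega
                have : (4/5:ℝ)^(2*k-1) * (4/5) = (4/5:ℝ)^(2*k) := by
                  rw [← pow_succ, h2]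
                have h3 : (4/5:ℝ)^(2*k) = (16/25:ℝ)^k := by rw [pow_mul]; norm_num
                nlinarith [pow_pos (show (0:ℝ) < 4/5 by norm_num) (2*k-1)]
  · apply summable_of_ne_finset_zero (s := {0})
    intro k hk
    simp only [Finset.mem_singleton] at hk
    have : 2*k+m ≠ 0 := by omega
    simp [zero_pow this]

lemma summable_shape (e : ℕ → ℝ) (E : ℝ) (hE : ∀ k, |e k| ≤ E) {x : ℝ} (hx : |x| ≤ 4/5) :
    Summable (fun k => e k * ((2*k:ℕ):ℝ) * x ^ (2*k-1)) := by
  rw [← summable_nat_add_iff 1]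
  have : ∀ n : ℕ, e (n+1) * ((2*(n+1):ℕ):ℝ) * x ^ (2*(n+1)-1)
      = (e (n+1) * ((2*(n+1):ℕ):ℝ)) * x ^ (2*n+1) := by
    intro n
    have h : 2*(n+1)-1 = 2*n+1 := by omega
    rw [h]
  apply Summable.congr _ (fun n => (this n).symm)
  apply summable_poly_geom _ (2*E) _ hx 1
  intro k
  have hE0 : 0 ≤ E := le_trans (abs_nonneg _) (hE 0)
  rw [abs_mul]
  calc |e (k+1)| * |((2*(k+1):ℕ):ℝ)| ≤ E * (2*(k:ℝ)+2) := by
        apply mul_le_mul (hE _) _ (abs_nonneg _) hE0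
        rw [abs_of_nonneg (by positivity)]; push_cast; linarith
    _ ≤ 2*E * ((k:ℝ)+1) := by nlinarith [Nat.cast_nonneg (α := ℝ) k]

lemma tsum_deriv_reindex (e : ℕ → ℝ) (E : ℝ) (hE : ∀ k, |e k| ≤ E) {x : ℝ}
    (hx : |x| ≤ 4/5) :
    ∑' k, e k * ((2*k:ℕ):ℝ) * x ^ (2*k-1)
      = ∑' k, (e (k+1) * (2*(k:ℝ)+2)) * x ^ (2*k+1) := by
  rw [Summable.tsum_eq_zero_add (summable_shape e E hE hx)]
  simp only [Nat.mul_zero, Nat.cast_zero, mul_zero, zero_mul, zero_add]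
  apply tsum_congr
  intro n
  have h : 2*(n+1)-1 = 2*n+1 := by omega
  rw [h]
  push_cast
  ring

lemma ode_generic (e r : ℕ → ℝ) (E : ℝ) (hE : ∀ k, |e k| ≤ E) (hR : ∀ k, |r k| ≤ E)
    (hrec : ∀ k, e (k+1) * (2*(k:ℝ)+2) = e k * (2*(k:ℝ)+1) + r k)
    {x : ℝ} (hx : |x| ≤ 4/5) :
    (1 - x^2) * (∑' k, e k * ((2*k:ℕ):ℝ) * x ^ (2*k-1))
      = x * (∑' k, e k * x ^ (2*k)) + (∑' k, r k * x ^ (2*k+1)) := by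
  have hE0 : 0 ≤ E := le_trans (abs_nonneg _) (hE 0)
  set D := ∑' k, e k * ((2*k:ℕ):ℝ) * x ^ (2*k-1) with hD
  have s1 : Summable (fun k => (e k * (2*(k:ℝ))) * x ^ (2*k+1)) := by
    apply summable_poly_geom _ (2*E) _ hx 1
    intro k; rw [abs_mul]
    calc |e k| * |2*(k:ℝ)| ≤ E * (2*(k:ℝ)) := by
          apply mul_le_mul (hE k) _ (abs_nonneg _) hE0
          rw [abs_of_nonneg (by positivity)]
      _ ≤ 2*E * ((k:ℝ)+1) := by nlinarith [Nat.cast_nonneg (α := ℝ) k]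
  have s2 : Summable (fun k => e k * x ^ (2*k+1)) := by
    apply summable_poly_geom _ E _ hx 1
    intro k; nlinarith [hE k, abs_nonneg (e k), Nat.cast_nonneg (α := ℝ) k]
  have s3 : Summable (fun k => r k * x ^ (2*k+1)) := by
    apply summable_poly_geom _ E _ hx 1
    intro k; nlinarith [hR k, abs_nonneg (r k), Nat.cast_nonneg (α := ℝ) k]
  have step1 : D = ∑' k, (e k * (2*(k:ℝ)) * x ^ (2*k+1)
      + (e k * x ^ (2*k+1) + r k * x ^ (2*k+1))) := by
    rw [hD, tsum_deriv_reindex e E hE hx]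
    apply tsum_congr
    intro k
    rw [hrec k]
    ring
  have step2 : D = (∑' k, e k * (2*(k:ℝ)) * x ^ (2*k+1))
      + ((∑' k, e k * x ^ (2*k+1)) + (∑' k, r k * x ^ (2*k+1))) := by
    rw [step1, Summable.tsum_add s1 (s2.add s3), Summable.tsum_add s2 s3]
  have step3 : x^2 * D = ∑' k, e k * (2*(k:ℝ)) * x ^ (2*k+1) := by
    rw [hD, ← tsum_mul_left]
    apply tsum_congr
    intro k
    rcases Nat.eq_zero_or_pos k with hk | hk
    · subst hk; simp
    · have h2 : 2*k-1+2 = 2*k+1 := by omega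
      have : x^2 * x^(2*k-1) = x^(2*k+1) := by
        rw [← pow_add, Nat.add_comm, h2]
      push_cast
      linear_combination (e k * (2*(k:ℝ))) * this
  have step4 : x * (∑' k, e k * x ^ (2*k)) = ∑' k, e k * x ^ (2*k+1) := by
    rw [← tsum_mul_left]
    apply tsum_congr
    intro k
    rw [pow_succ]
    ring
  rw [step4]
  nlinarith [step2, step3]

/-! ### The three series -/

noncomputable def UU (x : ℝ) : ℝ := ∑' k, cB k * x ^ (2*k)
noncomputable def VV (x : ℝ) : ℝ := ∑' k, bB k * x ^ (2*k+1)
noncomputable def WW (x : ℝ) : ℝ := ∑' k, aA k * x ^ (2*k)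
noncomputable def DU (x : ℝ) : ℝ := ∑' k, cB k * ((2*k:ℕ):ℝ) * x ^ (2*k-1)
noncomputable def DW (x : ℝ) : ℝ := ∑' k, aA k * ((2*k:ℕ):ℝ) * x ^ (2*k-1)

lemma hasDerivAt_UU {x : ℝ} (hx : x ∈ Set.Ioo (-(4/5):ℝ) (4/5)) :
    HasDerivAt UU (DU x) x := by
  have h := hasDerivAt_master cB 1 cB_bound 0 (by norm_num) hx
  simp only [Nat.add_zero] at h
  exact h

lemma hasDerivAt_WW {x : ℝ} (hx : x ∈ Set.Ioo (-(4/5):ℝ) (4/5)) :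
    HasDerivAt WW (DW x) x := by
  have h := hasDerivAt_master aA 2 aA_bound 0 (by norm_num) hx
  simp only [Nat.add_zero] at h
  exact h

lemma hasDerivAt_VV {x : ℝ} (hx : x ∈ Set.Ioo (-(4/5):ℝ) (4/5)) :
    HasDerivAt VV (UU x) x := by
  have h := hasDerivAt_master bB 1 bB_bound 1 (le_refl 1) hx
  simp only [Nat.add_sub_cancel] at h
  have heq : (∑' k, bB k * ((2*k+1:ℕ):ℝ) * x ^ (2*k)) = UU x := by
    apply tsum_congr
    intro k
    have hne : (2*(k:ℝ)+1) ≠ 0 := by positivity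
    have : bB k * (2*(k:ℝ)+1) = cB k := by
      simp only [bB]; field_simp
    push_cast
    linear_combination x^(2*k) * this
  rw [heq] at h
  exact h

lemma ode_U {x : ℝ} (hx : |x| ≤ 4/5) : (1 - x^2) * DU x = x * UU x := by
  have h := ode_generic cB (fun _ => 0) 1 cB_bound (by intro k; simp)
    (by intro k; rw [add_zero]; exact cB_succ k) hx
  rw [show (∑' (k:ℕ), (0:ℝ) * x^(2*k+1)) = 0 by simp, add_zero] at h
  exact h

lemma ode_W {x : ℝ} (hx : |x| ≤ 4/5) : (1 - x^2) * DW x = x * WW x + VV x := by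
  have h := ode_generic aA bB 2 aA_bound (fun k => le_trans (bB_bound k) one_le_two)
    aA_succ hx
  exact h

/-! ### Evaluation at √2/2 -/

lemma sqrt2_lt : Real.sqrt 2 < 8/5 := by
  nlinarith [Real.sq_sqrt (show (0:ℝ) ≤ 2 by norm_num), Real.sqrt_nonneg 2]

lemma sqrt2_pos : (0:ℝ) < Real.sqrt 2 := by
  have : (1:ℝ) ≤ Real.sqrt 2 := by
    nlinarith [Real.sq_sqrt (show (0:ℝ) ≤ 2 by norm_num), Real.sqrt_nonneg 2]
  linarith

lemma c0_mem {x : ℝ} (hx : x ∈ Set.Icc (0:ℝ) (Real.sqrt 2 / 2)) :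
    x ∈ Set.Ioo (-(4/5):ℝ) (4/5) := by
  constructor
  · linarith [hx.1]
  · have := sqrt2_lt
    have := hx.2
    linarith

lemma c0_abs {x : ℝ} (hx : x ∈ Set.Icc (0:ℝ) (Real.sqrt 2 / 2)) : |x| ≤ 4/5 := by
  have h := c0_mem hx
  rw [abs_le]; exact ⟨h.1.le, h.2.le⟩

lemma one_sub_sq_pos {x : ℝ} (hx : |x| ≤ 4/5) : 0 < 1 - x^2 := by
  nlinarith [sq_abs x, abs_nonneg x]

lemma hasDerivAt_B {x : ℝ} (hx : |x| ≤ 4/5) :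
    HasDerivAt (fun y : ℝ => Real.sqrt (1 - y^2)) (-x / Real.sqrt (1 - x^2)) x := by
  have hpos := one_sub_sq_pos hx
  have hinner : HasDerivAt (fun y : ℝ => 1 - y^2) (-(2*x)) x := by
    have h := ((hasDerivAt_pow 2 x)).const_sub 1
    exact h.congr_deriv (by norm_num)
  have h := hinner.sqrt (ne_of_gt hpos)
  convert h using 1
  have hs : Real.sqrt (1 - x^2) ≠ 0 := ne_of_gt (Real.sqrt_pos.mpr hpos)
  field_simp

lemma UU_zero : UU 0 = 1 := by
  rw [UU, tsum_eq_single 0]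
  · simp [cB_zero]
  · intro k hk
    have : 2*k ≠ 0 := by omega
    simp [zero_pow this]

lemma WW_zero : WW 0 = 0 := by
  rw [WW, tsum_eq_single 0]
  · simp [aA, oS_zero]
  · intro k hk
    have : 2*k ≠ 0 := by omega
    simp [zero_pow this]

lemma VV_zero : VV 0 = 0 := by
  simp [VV]

lemma key1 : ∀ x ∈ Set.Icc (0:ℝ) (Real.sqrt 2 / 2),
    UU x * Real.sqrt (1 - x^2) = 1 := by
  have hc : (0:ℝ) ≤ Real.sqrt 2 / 2 := by positivity
  have := constant_of_has_deriv_right_zero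
    (f := fun x => UU x * Real.sqrt (1 - x^2)) (a := 0) (b := Real.sqrt 2 / 2)
    ?_ ?_
  · intro x hx
    have h := this x hx
    simpa [UU_zero] using h
  · intro x hx
    exact (((hasDerivAt_UU (c0_mem hx)).mul (hasDerivAt_B (c0_abs hx)))).continuousAt.continuousWithinAt
  · intro x hx
    have hx' : x ∈ Set.Icc (0:ℝ) (Real.sqrt 2 / 2) := Set.mem_Icc_of_Ico hx
    have habs := c0_abs hx'
    have hpos := one_sub_sq_pos habs
    have hs : Real.sqrt (1 - x^2) ≠ 0 := ne_of_gt (Real.sqrt_pos.mpr hpos)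
    have hsq : Real.sqrt (1 - x^2) ^ 2 = 1 - x^2 := Real.sq_sqrt hpos.le
    have hd := (hasDerivAt_UU (c0_mem hx')).mul (hasDerivAt_B habs)
    have hode := ode_U habs
    have h2 : DU x * Real.sqrt (1 - x^2) + UU x * (-x / Real.sqrt (1 - x^2))
        = (DU x * Real.sqrt (1 - x^2)^2 - x * UU x) / Real.sqrt (1 - x^2) := by
      field_simp
      ring
    have hval : DU x * Real.sqrt (1 - x^2) + UU x * (-x / Real.sqrt (1 - x^2)) = 0 := by
      rw [h2, hsq]
      rw [show (1 - x^2) * DU x = DU x * (1 - x^2) from mul_comm _ _] at hode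
      rw [hode, sub_self, zero_div]
    rw [hval] at hd
    exact hd.hasDerivWithinAt

lemma key2 : ∀ x ∈ Set.Icc (0:ℝ) (Real.sqrt 2 / 2), VV x = Real.arcsin x := by
  have := constant_of_has_deriv_right_zero
    (f := fun x => VV x - Real.arcsin x) (a := 0) (b := Real.sqrt 2 / 2)
    ?_ ?_
  · intro x hx
    have h := this x hx
    simp [VV_zero] at h
    linarith [h]
  · intro x hx
    have habs := c0_abs hx
    have hne1 : x ≠ -1 := by intro h; rw [h] at habs; norm_num at habs
    have hne2 : x ≠ 1 := by intro h; rw [h] at habs; norm_num at habs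
    exact ((hasDerivAt_VV (c0_mem hx)).sub (Real.hasDerivAt_arcsin hne1 hne2)).continuousAt.continuousWithinAt
  · intro x hx
    have hx' : x ∈ Set.Icc (0:ℝ) (Real.sqrt 2 / 2) := Set.mem_Icc_of_Ico hx
    have habs := c0_abs hx'
    have hpos := one_sub_sq_pos habs
    have hs : Real.sqrt (1 - x^2) ≠ 0 := ne_of_gt (Real.sqrt_pos.mpr hpos)
    have hne1 : x ≠ -1 := by intro h; rw [h] at habs; norm_num at habs
    have hne2 : x ≠ 1 := by intro h; rw [h] at habs; norm_num at habs
    have hd := (hasDerivAt_VV (c0_mem hx')).sub (Real.hasDerivAt_arcsin hne1 hne2)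
    have hUval : UU x = 1 / Real.sqrt (1 - x^2) := by
      have := key1 x hx'
      field_simp
      linarith [this]
    rw [hUval, sub_self] at hd
    exact hd.hasDerivWithinAt

lemma key3 : ∀ x ∈ Set.Icc (0:ℝ) (Real.sqrt 2 / 2),
    WW x * Real.sqrt (1 - x^2) = Real.arcsin x ^ 2 / 2 := by
  have := constant_of_has_deriv_right_zero
    (f := fun x => WW x * Real.sqrt (1 - x^2) - Real.arcsin x ^ 2 / 2)
    (a := 0) (b := Real.sqrt 2 / 2) ?_ ?_
  · intro x hx
    have h := this x hx
    simp [WW_zero] at h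
    linarith [h]
  · intro x hx
    have habs := c0_abs hx
    have hne1 : x ≠ -1 := by intro h; rw [h] at habs; norm_num at habs
    have hne2 : x ≠ 1 := by intro h; rw [h] at habs; norm_num at habs
    exact (((hasDerivAt_WW (c0_mem hx)).mul (hasDerivAt_B habs)).sub
      (((Real.hasDerivAt_arcsin hne1 hne2).pow 2).div_const 2)).continuousAt.continuousWithinAt
  · intro x hx
    have hx' : x ∈ Set.Icc (0:ℝ) (Real.sqrt 2 / 2) := Set.mem_Icc_of_Ico hx
    have habs := c0_abs hx'
    have hpos := one_sub_sq_pos habs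
    have hs : Real.sqrt (1 - x^2) ≠ 0 := ne_of_gt (Real.sqrt_pos.mpr hpos)
    have hsq : Real.sqrt (1 - x^2) ^ 2 = 1 - x^2 := Real.sq_sqrt hpos.le
    have hne1 : x ≠ -1 := by intro h; rw [h] at habs; norm_num at habs
    have hne2 : x ≠ 1 := by intro h; rw [h] at habs; norm_num at habs
    have hd := ((hasDerivAt_WW (c0_mem hx')).mul (hasDerivAt_B habs)).sub
      (((Real.hasDerivAt_arcsin hne1 hne2).pow 2).div_const 2)
    have hode := ode_W habs
    have hV := key2 x hx'
    have hnum : (1 - x^2) * DW x - x * WW x - Real.arcsin x = 0 := by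
      linear_combination hode + hV
    have hd2 := hd.hasDerivWithinAt (s := Set.Ici x)
    refine hd2.congr_deriv ?_
    rw [eq_comm]
    push_cast
    field_simp
    linear_combination (-1) * hnum - DW x * hsq

lemma c0_sq : (Real.sqrt 2 / 2)^2 = 1/2 := by
  rw [div_pow, Real.sq_sqrt (by norm_num : (0:ℝ) ≤ 2)]
  norm_num

lemma arcsin_c0 : Real.arcsin (Real.sqrt 2 / 2) = Real.pi / 4 := by
  rw [show Real.sqrt 2 / 2 = Real.sin (Real.pi/4) from (Real.sin_pi_div_four).symm]
  apply Real.arcsin_sin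
  · linarith [Real.pi_pos]
  · linarith [Real.pi_pos]

lemma WW_c0 : WW (Real.sqrt 2 / 2) = Real.pi ^ 2 / (16 * Real.sqrt 2) := by
  have hmem : Real.sqrt 2 / 2 ∈ Set.Icc (0:ℝ) (Real.sqrt 2 / 2) :=
    ⟨by positivity, le_refl _⟩
  have h := key3 _ hmem
  rw [c0_sq] at h
  have hB : Real.sqrt (1 - 1/2) = Real.sqrt 2 / 2 := by
    rw [show (1 - 1/2 : ℝ) = 1/2 by norm_num, show (1/2:ℝ) = (Real.sqrt 2/2)^2 from c0_sq.symm,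
      Real.sqrt_sq (by positivity)]
  rw [hB, arcsin_c0] at h
  have hs := sqrt2_pos
  have hss : Real.sqrt 2 * Real.sqrt 2 = 2 := Real.mul_self_sqrt (by norm_num)
  field_simp at h ⊢
  nlinarith [h]

end CBH

theorem sum_central_binom_harmonic2_8pow :
    ∑' k : ℕ,
        (Nat.choose (2 * k) k : ℝ) / 8 ^ k *
          ((∑ j ∈ Finset.Icc 1 (2 * k), (1 : ℝ) / (j : ℝ) ^ 2) -
            (1 / 4) * ∑ j ∈ Finset.Icc 1 k, (1 : ℝ) / (j : ℝ) ^ 2) =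
      Real.pi ^ 2 / (16 * Real.sqrt 2) := by
  have hterm : ∀ k : ℕ,
      (Nat.choose (2 * k) k : ℝ) / 8 ^ k *
          ((∑ j ∈ Finset.Icc 1 (2 * k), (1 : ℝ) / (j : ℝ) ^ 2) -
            (1 / 4) * ∑ j ∈ Finset.Icc 1 k, (1 : ℝ) / (j : ℝ) ^ 2)
        = CBH.aA k * (Real.sqrt 2 / 2) ^ (2*k) := by
    intro k
    rw [CBH.harmonic_eq k]
    rw [pow_mul, CBH.c0_sq]
    simp only [CBH.aA, CBH.cB]
    have h8 : (8:ℝ)^k = 4^k * 2^k := by rw [← mul_pow]; norm_num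
    have h12 : ((1:ℝ)/2)^k = 1/2^k := by rw [div_pow]; norm_num
    rw [h8, h12]
    field_simp
  calc ∑' k : ℕ, (Nat.choose (2 * k) k : ℝ) / 8 ^ k *
          ((∑ j ∈ Finset.Icc 1 (2 * k), (1 : ℝ) / (j : ℝ) ^ 2) -
            (1 / 4) * ∑ j ∈ Finset.Icc 1 k, (1 : ℝ) / (j : ℝ) ^ 2)
      = ∑' k : ℕ, CBH.aA k * (Real.sqrt 2 / 2) ^ (2*k) := tsum_congr hterm
    _ = CBH.WW (Real.sqrt 2 / 2) := rfl
    _ = Real.pi ^ 2 / (16 * Real.sqrt 2) := CBH.WW_c0
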